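/- Fix η₁ ≤ η₂ with η₁ + η₂ = 1, and m ∈ [0,1]. The piecewise function P_max(m, S) given by: (1+√(1−4η₁η₂S))/2 if m ≥ m_c(S); (√m + √(1−2√(η₁η₂S)))² if m_c'(S) ≤ m ≤ m_c(S); and η₂(√(mS/η₁) + √((η₁−m)(1−S)/η₁))² if 0 ≤ m ≤ m_c'(S), is monotonically nonincreasing in S ∈ [0,1]. -/

import Mathlib

private lemma sq_le_on (t e : ℝ) (he : 0 ≤ e) (h : t^2 ≤ e^2) : t ≤ e := by
  nlinarith [sq_nonneg (t - e), sq_nonneg (t + e)]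

private lemma cs2 (a b c d e : ℝ) (ha : 0 ≤ a) (hb : 0 ≤ b) (hd : 0 ≤ d)
    (he : 0 ≤ e) (hee : (a^2+b^2)*(c^2+d^2) ≤ e^2) : a*c + b*d ≤ e := by
  apply sq_le_on _ _ he
  nlinarith [sq_nonneg (a*d - b*c)]

private lemma keyBA (η₁ η₂ S m : ℝ) (h₁ : 0 ≤ η₁) (hle : η₁ ≤ η₂) (hsum : η₁ + η₂ = 1)
    (hm0 : 0 ≤ m) (hS0 : 0 ≤ S) (hS1 : S ≤ 1)
    (hm : m ≤ (1 - Real.sqrt (1 - 4*η₁*η₂*S))/2) :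
    (Real.sqrt m + Real.sqrt (1 - 2*Real.sqrt (η₁*η₂*S)))^2
      ≤ (1 + Real.sqrt (1 - 4*η₁*η₂*S))/2 := by
  have hη₂ : 0 < η₂ := by linarith
  have hq0 : 0 ≤ η₁*η₂*S := by positivity
  have hq4 : η₁*η₂*S ≤ 1/4 := by
    nlinarith [sq_nonneg (η₁-η₂), mul_le_of_le_one_right (mul_nonneg h₁ hη₂.le) hS1]
  set u := Real.sqrt (η₁*η₂*S) with hu
  set d := Real.sqrt (1 - 4*η₁*η₂*S) with hdd
  have hu0 : 0 ≤ u := Real.sqrt_nonneg _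
  have hu2 : u^2 = η₁*η₂*S := Real.sq_sqrt hq0
  have huh : u ≤ 1/2 := sq_le_on _ _ (by norm_num) (by rw [hu2]; nlinarith)
  have hd0 : 0 ≤ d := Real.sqrt_nonneg _
  have hd2 : d^2 = 1 - 4*η₁*η₂*S := Real.sq_sqrt (by linarith)
  have hd1 : d ≤ 1 := sq_le_on _ _ (by norm_num) (by rw [hd2]; nlinarith)
  have h12u : 0 ≤ 1 - 2*u := by linarith
  have hdu : 1 - 2*u ≤ d := sq_le_on _ _ hd0 (by rw [hd2]; nlinarith [hu2])
  have hp0 : 0 ≤ (1-d)/2 := by linarith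
  have hpu : (1-d)/2 ≤ u := by linarith
  have hprod : Real.sqrt ((1-d)/2 * (1-2*u)) = u - (1-d)/2 := by
    rw [show (1-d)/2 * (1-2*u) = (u - (1-d)/2)^2 by linear_combination (-1/4 : ℝ)*hd2 - hu2]
    exact Real.sqrt_sq (by linarith)
  have hexp : (Real.sqrt ((1-d)/2) + Real.sqrt (1-2*u))^2 = (1+d)/2 := by
    rw [add_sq, Real.sq_sqrt hp0, Real.sq_sqrt h12u, mul_assoc, ← Real.sqrt_mul hp0, hprod]
    ring
  calc (Real.sqrt m + Real.sqrt (1-2*u))^2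
      ≤ (Real.sqrt ((1-d)/2) + Real.sqrt (1-2*u))^2 := by
        apply pow_le_pow_left₀ (by positivity)
        exact add_le_add_left (Real.sqrt_le_sqrt hm) _
    _ = (1+d)/2 := hexp

private lemma keyCB (η₁ η₂ S m : ℝ) (h₁ : 0 < η₁) (hle : η₁ ≤ η₂) (hsum : η₁ + η₂ = 1)
    (hm0 : 0 ≤ m) (hmη : m ≤ η₁) (hS0 : 0 ≤ S) (hS1 : S ≤ 1) :
    η₂ * (Real.sqrt (m/η₁*S) + Real.sqrt ((η₁-m)/η₁*(1-S)))^2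
      ≤ (Real.sqrt m + Real.sqrt (1 - 2*Real.sqrt (η₁*η₂*S)))^2 := by
  have hη₂ : 0 < η₂ := by linarith
  have hS1' : 0 ≤ 1 - S := by linarith
  have hmη' : 0 ≤ η₁ - m := by linarith
  have e1 : Real.sqrt (m/η₁*S) = Real.sqrt m * Real.sqrt S / Real.sqrt η₁ := by
    rw [show m/η₁*S = m*S/η₁ by ring, Real.sqrt_div (by positivity), Real.sqrt_mul hm0]
  have e2 : Real.sqrt ((η₁-m)/η₁*(1-S))
      = Real.sqrt (η₁-m) * Real.sqrt (1-S) / Real.sqrt η₁ := by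
    rw [show (η₁-m)/η₁*(1-S) = (η₁-m)*(1-S)/η₁ by ring, Real.sqrt_div (by positivity),
      Real.sqrt_mul hmη']
  have hu : Real.sqrt (η₁*η₂*S) = Real.sqrt η₁ * (Real.sqrt η₂ * Real.sqrt S) := by
    rw [Real.sqrt_mul (by positivity) S, Real.sqrt_mul h₁.le, mul_assoc]
  rw [e1, e2, hu]
  set sm := Real.sqrt m
  set sm' := Real.sqrt (η₁-m)
  set s1 := Real.sqrt η₁
  set s2 := Real.sqrt η₂
  set sS := Real.sqrt S
  set sS' := Real.sqrt (1-S)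
  set sw := Real.sqrt (1 - 2*(s1*(s2*sS)))
  have hm2 : sm^2 = m := Real.sq_sqrt hm0
  have hm'2 : sm'^2 = η₁ - m := Real.sq_sqrt hmη'
  have h12 : s1^2 = η₁ := Real.sq_sqrt h₁.le
  have h22 : s2^2 = η₂ := Real.sq_sqrt hη₂.le
  have hS2 : sS^2 = S := Real.sq_sqrt hS0
  have hS'2 : sS'^2 = 1 - S := Real.sq_sqrt hS1'
  have hs1 : 0 < s1 := Real.sqrt_pos.2 h₁
  have husq : (s1*(s2*sS))^2 = η₁*η₂*S := by
    rw [mul_pow, mul_pow, h12, h22, hS2]; ring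
  have hq4 : η₁*η₂*S ≤ 1/4 := by
    nlinarith [sq_nonneg (η₁-η₂), mul_le_of_le_one_right (mul_nonneg h₁.le hη₂.le) hS1]
  have huh : s1*(s2*sS) ≤ 1/2 :=
    sq_le_on _ _ (by norm_num) (by rw [husq]; nlinarith)
  have hu0 : 0 ≤ s1*(s2*sS) := by positivity
  have h12u : 0 ≤ 1 - 2*(s1*(s2*sS)) := by linarith
  have hw2 : sw^2 = 1 - 2*(s1*(s2*sS)) := Real.sq_sqrt h12u
  have hw0 : 0 ≤ sw := Real.sqrt_nonneg _
  have hsm0 : 0 ≤ sm := Real.sqrt_nonneg _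
  have hsm'0 : 0 ≤ sm' := Real.sqrt_nonneg _
  have hee : (sm^2+sm'^2)*((s2*sS-s1)^2+(s2*sS')^2) = (s1*sw)^2 := by
    have h' : (s2*sS-s1)^2+(s2*sS')^2
        = s2^2*sS^2 - 2*(s1*(s2*sS)) + s1^2 + s2^2*sS'^2 := by
      ring
    rw [h', mul_pow, hm2, hm'2, h22, hS2, hS'2, h12, hw2]
    linear_combination η₁ * hsum
  have hkey : sm*(s2*sS - s1) + sm'*(s2*sS') ≤ s1*sw :=
    cs2 _ _ _ _ _ hsm0 hsm'0 (by positivity) (by positivity) hee.le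
  have base : s2*(sm*sS/s1 + sm'*sS'/s1) ≤ sm + sw := by
    rw [← add_div, ← mul_div_assoc, div_le_iff₀ hs1]
    have hexp : s2*(sm*sS+sm'*sS') = (sm*(s2*sS - s1) + sm'*(s2*sS')) + sm*s1 := by ring
    linarith [hkey, hexp.le, hexp.ge]
  have hbase0 : 0 ≤ s2*(sm*sS/s1 + sm'*sS'/s1) := by positivity
  calc η₂*(sm*sS/s1 + sm'*sS'/s1)^2 = (s2*(sm*sS/s1 + sm'*sS'/s1))^2 := by rw [mul_pow, h22]
    _ ≤ (sm+sw)^2 := pow_le_pow_left₀ hbase0 base 2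

private lemma keyCC (η₁ η₂ S₁ S₂ m : ℝ) (h₁ : 0 < η₁) (hm0 : 0 ≤ m) (hmS : m ≤ η₁*S₁)
    (hη₂ : 0 ≤ η₂) (hS10 : 0 ≤ S₁) (hS21 : S₂ ≤ 1) (h12 : S₁ ≤ S₂) :
    η₂*(Real.sqrt (m/η₁*S₂) + Real.sqrt ((η₁-m)/η₁*(1-S₂)))^2
      ≤ η₂*(Real.sqrt (m/η₁*S₁) + Real.sqrt ((η₁-m)/η₁*(1-S₁)))^2 := by
  rcases eq_or_lt_of_le h12 with heq | hlt
  · rw [heq]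
  have hS20 : 0 ≤ S₂ := le_trans hS10 h12
  have hS11 : S₁ ≤ 1 := le_trans h12 hS21
  have hmS2 : m ≤ η₁*S₂ := le_trans hmS (by nlinarith)
  have hmη : m ≤ η₁ := le_trans hmS (by nlinarith)
  have hα0 : (0:ℝ) ≤ m/η₁ := by positivity
  have hκ0 : (0:ℝ) ≤ (η₁-m)/η₁ := div_nonneg (by linarith) h₁.le
  have e1 : ∀ S, Real.sqrt (m/η₁*S) = Real.sqrt (m/η₁) * Real.sqrt S :=
    fun S => Real.sqrt_mul hα0 S
  have e2 : ∀ S, Real.sqrt ((η₁-m)/η₁*S) = Real.sqrt ((η₁-m)/η₁) * Real.sqrt S :=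
    fun S => Real.sqrt_mul hκ0 S
  rw [e1, e1, e2, e2]
  set α := Real.sqrt (m/η₁)
  set κ := Real.sqrt ((η₁-m)/η₁)
  set a := Real.sqrt S₁
  set b := Real.sqrt S₂
  set a' := Real.sqrt (1-S₁)
  set b' := Real.sqrt (1-S₂)
  have ha2 : a^2 = S₁ := Real.sq_sqrt hS10
  have hb2 : b^2 = S₂ := Real.sq_sqrt hS20
  have ha'2 : a'^2 = 1-S₁ := Real.sq_sqrt (by linarith)
  have hb'2 : b'^2 = 1-S₂ := Real.sq_sqrt (by linarith)
  have hα : 0 ≤ α := Real.sqrt_nonneg _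
  have hκ : 0 ≤ κ := Real.sqrt_nonneg _
  have ha : 0 ≤ a := Real.sqrt_nonneg _
  have hb : 0 < b := Real.sqrt_pos.2 (by linarith)
  have ha' : 0 < a' := Real.sqrt_pos.2 (by linarith)
  have hb' : 0 ≤ b' := Real.sqrt_nonneg _
  have cross1 : α*a' ≤ κ*a := by
    rw [← Real.sqrt_mul hα0, ← Real.sqrt_mul hκ0]
    apply Real.sqrt_le_sqrt
    rw [div_mul_eq_mul_div, div_mul_eq_mul_div, div_le_div_iff₀ h₁ h₁]
    nlinarith
  have cross2 : α*b' ≤ κ*b := by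
    rw [← Real.sqrt_mul hα0, ← Real.sqrt_mul hκ0]
    apply Real.sqrt_le_sqrt
    rw [div_mul_eq_mul_div, div_mul_eq_mul_div, div_le_div_iff₀ h₁ h₁]
    nlinarith
  have inner : α*b + κ*b' ≤ α*a + κ*a' := by
    have hP : 0 < (a+b)*(a'+b') := by
      apply mul_pos <;> linarith
    have Hid : (α*a + κ*a' - α*b - κ*b') * ((a+b)*(a'+b'))
        = (S₂-S₁)*((κ*a - α*a') + (κ*b - α*b')) := by
      linear_combination (α*(a'+b'))*ha2 - (α*(a'+b'))*hb2 + (κ*(a+b))*ha'2 - (κ*(a+b))*hb'2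
    have Hpos : 0 ≤ (S₂-S₁)*((κ*a - α*a') + (κ*b - α*b')) :=
      mul_nonneg (by linarith) (by linarith)
    nlinarith [Hid, Hpos, hP]
  have hsum0 : 0 ≤ α*b + κ*b' := by positivity
  exact mul_le_mul_of_nonneg_left (pow_le_pow_left₀ hsum0 inner 2) hη₂

private lemma mcp_facts (η₁ η₂ S m : ℝ) (h₁ : 0 ≤ η₁) (hle : η₁ ≤ η₂) (hsum : η₁+η₂=1)
    (hm0 : 0 ≤ m) (hS0 : 0 ≤ S) (hS1 : S ≤ 1)
    (h : ¬ ((if η₁ ≤ η₂*S then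
        (η₁ - Real.sqrt (η₁*η₂*S))^2/(1 - 2*Real.sqrt (η₁*η₂*S)) else 0) ≤ m)) :
    0 < η₁ ∧ η₁ ≤ η₂*S ∧ η₁ ≤ Real.sqrt (η₁*η₂*S) ∧ Real.sqrt (η₁*η₂*S) < 1/2 ∧
      m ≤ η₁*S ∧ m ≤ η₁ ∧
      m < (η₁ - Real.sqrt (η₁*η₂*S))^2/(1 - 2*Real.sqrt (η₁*η₂*S)) := by
  push_neg at h
  have hη₂ : 0 < η₂ := by linarith
  by_cases hc : η₁ ≤ η₂*S
  swap
  · rw [if_neg hc] at h; linarith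
  rw [if_pos hc] at h
  have hq0 : 0 ≤ η₁*η₂*S := by positivity
  set u := Real.sqrt (η₁*η₂*S) with hud
  have hu0 : 0 ≤ u := Real.sqrt_nonneg _
  have hu2 : u^2 = η₁*η₂*S := Real.sq_sqrt hq0
  have hq4 : η₁*η₂*S ≤ 1/4 := by
    nlinarith [sq_nonneg (η₁-η₂), mul_le_of_le_one_right (mul_nonneg h₁ hη₂.le) hS1]
  have huh : u ≤ 1/2 := sq_le_on _ _ (by norm_num) (by rw [hu2]; nlinarith)
  have hη₁pos : 0 < η₁ := by
    rcases h₁.eq_or_lt with h0 | h0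
    · exfalso
      have hz : u = 0 := by rw [hud, show η₁*η₂*S = 0 by rw [← h0]; ring, Real.sqrt_zero]
      rw [hz, ← h0] at h
      norm_num at h
      linarith
    · exact h0
  have huhalf : u < 1/2 := by
    rcases lt_or_eq_of_le huh with h' | h'
    · exact h'
    · exfalso
      rw [h', show (1:ℝ) - 2*(1/2) = 0 by norm_num, div_zero] at h
      linarith
  have h12u : 0 < 1 - 2*u := by linarith
  have hηu : η₁ ≤ u := sq_le_on _ _ hu0 (by nlinarith [hu2])
  have hd : m*(1-2*u) < (η₁-u)^2 := by
    rw [div_eq_mul_inv] at h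
    calc m*(1-2*u) < (η₁-u)^2 * (1-2*u)⁻¹ * (1-2*u) := by
          apply mul_lt_mul_of_pos_right h h12u
      _ = (η₁-u)^2 := by rw [mul_assoc, inv_mul_cancel₀ h12u.ne', mul_one]
  have key2 : η₂*(η₁-u)^2 ≤ u^2*(1-2*u) := by
    nlinarith [mul_nonneg
      (show (0:ℝ) ≤ η₁*η₂ - u^2 by
        nlinarith [hu2, mul_nonneg (mul_nonneg h₁ hη₂.le) (sub_nonneg.2 hS1)])
      (show (0:ℝ) ≤ 2*u - η₁ by linarith)]
  have hmS : m ≤ η₁*S := by nlinarith [hd, key2, hu2, mul_pos h12u hη₂]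
  refine ⟨hη₁pos, hc, hηu, huhalf, hmS, by nlinarith, h⟩

private lemma mcp_mono (η₁ η₂ u₁ u₂ : ℝ) (h₁ : 0 ≤ η₁) (hsum : η₁+η₂=1) (hle : η₁ ≤ η₂)
    (hηu : η₁ ≤ u₁) (h12 : u₁ ≤ u₂) (hu1h : u₁ < 1/2) (hu2h : u₂ < 1/2) :
    (η₁-u₁)^2/(1-2*u₁) ≤ (η₁-u₂)^2/(1-2*u₂) := by
  rw [div_le_div_iff₀ (by linarith) (by linarith)]
  nlinarith [mul_nonneg (mul_nonneg (sub_nonneg.2 h12) (sub_nonneg.2 hηu))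
      (show (0:ℝ) ≤ 1-2*u₂ by linarith),
    mul_nonneg (mul_nonneg (sub_nonneg.2 h12) (show (0:ℝ) ≤ u₂-η₁ by linarith))
      (show (0:ℝ) ≤ 1-2*η₁ by linarith)]

set_option maxHeartbeats 2000000 in
/-- The maximum success probability `P_max(m, S)` for error-margin discrimination of two pure
states with squared overlap `S` and priors `η₁ ≤ η₂` is monotonically nonincreasing in
`S ∈ [0,1]`. -/
theorem pmax_antitone_in_overlap (η₁ η₂ : ℝ)
    (h₁ : 0 ≤ η₁) (hle : η₁ ≤ η₂) (hsum : η₁ + η₂ = 1)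
    (m : ℝ) (hm0 : 0 ≤ m) (hm1 : m ≤ 1) :
    AntitoneOn (fun S : ℝ =>
      if (1 - Real.sqrt (1 - 4 * η₁ * η₂ * S)) / 2 ≤ m then
        (1 + Real.sqrt (1 - 4 * η₁ * η₂ * S)) / 2
      else if (if η₁ ≤ η₂ * S then
            (η₁ - Real.sqrt (η₁ * η₂ * S)) ^ 2 / (1 - 2 * Real.sqrt (η₁ * η₂ * S))
          else 0) ≤ m then
        (Real.sqrt m + Real.sqrt (1 - 2 * Real.sqrt (η₁ * η₂ * S))) ^ 2
      else
        η₂ * (Real.sqrt (m / η₁ * S) + Real.sqrt ((η₁ - m) / η₁ * (1 - S))) ^ 2)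
      (Set.Icc 0 1) := by
  intro S₁ hS₁ S₂ hS₂ h12
  obtain ⟨hS₁0, hS₁1⟩ := hS₁
  obtain ⟨hS₂0, hS₂1⟩ := hS₂
  have hη₂ : 0 < η₂ := by linarith
  have hqmono : η₁*η₂*S₁ ≤ η₁*η₂*S₂ :=
    mul_le_mul_of_nonneg_left h12 (mul_nonneg h₁ hη₂.le)
  have hq0₁ : 0 ≤ η₁*η₂*S₁ := by positivity
  have hq0₂ : 0 ≤ η₁*η₂*S₂ := by positivity
  have hdmono : Real.sqrt (1-4*η₁*η₂*S₂) ≤ Real.sqrt (1-4*η₁*η₂*S₁) :=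
    Real.sqrt_le_sqrt (by nlinarith)
  have humono : Real.sqrt (η₁*η₂*S₁) ≤ Real.sqrt (η₁*η₂*S₂) :=
    Real.sqrt_le_sqrt (by nlinarith)
  have hAmono : (1+Real.sqrt (1-4*η₁*η₂*S₂))/2 ≤ (1+Real.sqrt (1-4*η₁*η₂*S₁))/2 := by
    linarith
  have hBmono : (Real.sqrt m + Real.sqrt (1-2*Real.sqrt (η₁*η₂*S₂)))^2
      ≤ (Real.sqrt m + Real.sqrt (1-2*Real.sqrt (η₁*η₂*S₁)))^2 := by
    apply pow_le_pow_left₀ (by positivity)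
    exact add_le_add_right (Real.sqrt_le_sqrt (by linarith)) _
  simp only
  split_ifs with h1 h2 h3 h4 h5 h6 h7 h8 h9 h10 h11 h12' h13 h14 h15
  -- 1: (A,A)
  · exact hAmono
  -- 2: (?,A) impossible
  · exact absurd (le_trans (by linarith : (1 - Real.sqrt (1-4*η₁*η₂*S₁))/2
      ≤ (1 - Real.sqrt (1-4*η₁*η₂*S₂))/2) h1) h2
  · exact absurd (le_trans (by linarith : (1 - Real.sqrt (1-4*η₁*η₂*S₁))/2
      ≤ (1 - Real.sqrt (1-4*η₁*η₂*S₂))/2) h1) h2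
  · exact absurd (le_trans (by linarith : (1 - Real.sqrt (1-4*η₁*η₂*S₁))/2
      ≤ (1 - Real.sqrt (1-4*η₁*η₂*S₂))/2) h1) h2
  -- 5: B₂ ≤ A₁
  · exact le_trans (keyBA η₁ η₂ S₂ m h₁ hle hsum hm0 hS₂0 hS₂1 (le_of_lt (not_le.1 h1)))
      hAmono
  -- 6: B₂ ≤ B₁
  · exact hBmono
  -- 7: (C,B) impossible
  · exfalso
    obtain ⟨hp1, hc1, hηu1, huh1, hmS1, hmη1, hlt1⟩ :=
      mcp_facts η₁ η₂ S₁ m h₁ hle hsum hm0 hS₁0 hS₁1 (by rw [if_pos h8]; exact h9)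
    have hu2sq : (Real.sqrt (η₁*η₂*S₂))^2 = η₁*η₂*S₂ := Real.sq_sqrt hq0₂
    have huh2 : Real.sqrt (η₁*η₂*S₂) ≤ 1/2 := by
      apply sq_le_on _ _ (by norm_num)
      rw [hu2sq]
      nlinarith [sq_nonneg (η₁-η₂), mul_le_of_le_one_right (mul_nonneg h₁ hη₂.le) hS₂1]
    rcases lt_or_eq_of_le huh2 with h' | h'
    · have := mcp_mono η₁ η₂ (Real.sqrt (η₁*η₂*S₁)) (Real.sqrt (η₁*η₂*S₂))
        h₁ hsum hle hηu1 humono huh1 h'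
      linarith
    · have : η₁*η₂*S₂ = 1/4 := by rw [← hu2sq, h']; norm_num
      have hη₁h : η₁ < 1/2 := lt_of_le_of_lt hηu1 huh1
      nlinarith [mul_le_of_le_one_right (mul_nonneg h₁ hη₂.le) hS₂1,
        mul_pos (show (0:ℝ) < 1-2*η₁ by linarith) (show (0:ℝ) < 1-2*η₁ by linarith)]
  -- 8: B₂ ≤ B₁
  · exact hBmono
  -- 9: C₂ ≤ A₁
  · obtain ⟨hp2, hc2, hηu2, huh2, hmS2, hmη2, hlt2⟩ :=
      mcp_facts η₁ η₂ S₂ m h₁ hle hsum hm0 hS₂0 hS₂1 (by rw [if_pos h5]; exact h6)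
    calc η₂ * (Real.sqrt (m/η₁*S₂) + Real.sqrt ((η₁-m)/η₁*(1-S₂)))^2
        ≤ (Real.sqrt m + Real.sqrt (1 - 2*Real.sqrt (η₁*η₂*S₂)))^2 :=
          keyCB η₁ η₂ S₂ m hp2 hle hsum hm0 hmη2 hS₂0 hS₂1
      _ ≤ (1 + Real.sqrt (1-4*η₁*η₂*S₂))/2 :=
          keyBA η₁ η₂ S₂ m h₁ hle hsum hm0 hS₂0 hS₂1 (le_of_lt (not_le.1 h1))
      _ ≤ (1 + Real.sqrt (1-4*η₁*η₂*S₁))/2 := hAmono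
  -- 10: C₂ ≤ B₁
  · obtain ⟨hp2, hc2, hηu2, huh2, hmS2, hmη2, hlt2⟩ :=
      mcp_facts η₁ η₂ S₂ m h₁ hle hsum hm0 hS₂0 hS₂1 (by rw [if_pos h5]; exact h6)
    exact le_trans (keyCB η₁ η₂ S₂ m hp2 hle hsum hm0 hmη2 hS₂0 hS₂1) hBmono
  -- 11: C₂ ≤ C₁
  · obtain ⟨hp1, hc1, hηu1, huh1, hmS1, hmη1, hlt1⟩ :=
      mcp_facts η₁ η₂ S₁ m h₁ hle hsum hm0 hS₁0 hS₁1 (by rw [if_pos h11]; exact h12')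
    exact keyCC η₁ η₂ S₁ S₂ m hp1 hm0 hmS1 hη₂.le hS₁0 hS₂1 h12
  -- 12: C₂ ≤ B₁ (mc'₁ = 0 case)
  · obtain ⟨hp2, hc2, hηu2, huh2, hmS2, hmη2, hlt2⟩ :=
      mcp_facts η₁ η₂ S₂ m h₁ hle hsum hm0 hS₂0 hS₂1 (by rw [if_pos h5]; exact h6)
    exact le_trans (keyCB η₁ η₂ S₂ m hp2 hle hsum hm0 hmη2 hS₂0 hS₂1) hBmono
  -- 13: B₂ ≤ A₁
  · exact le_trans (keyBA η₁ η₂ S₂ m h₁ hle hsum hm0 hS₂0 hS₂1 (le_of_lt (not_le.1 h1)))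
      hAmono
  -- 14: B₂ ≤ B₁
  · exact hBmono
  -- 15: (C,B) with ¬η₁ ≤ η₂S₂ impossible
  · exfalso
    obtain ⟨hp1, hc1, hηu1, huh1, hmS1, hmη1, hlt1⟩ :=
      mcp_facts η₁ η₂ S₁ m h₁ hle hsum hm0 hS₁0 hS₁1 (by rw [if_pos h14]; exact h15)
    have : η₂*S₁ ≤ η₂*S₂ := mul_le_mul_of_nonneg_left h12 hη₂.le
    exact h5 (le_trans hc1 this)
  -- 16: B₂ ≤ B₁
  · exact hBmono
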